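/- Suppose a list L of N elements is partitioned into consecutive groups each of size at least g ≥ 1 except possibly the last. Fix an element x ∈ L belonging to group G, and suppose an element y ≥ x (in list order) lies within distance D of x in the list (at most D elements strictly between x and y). If each group contributes at most 2 representatives to an auxiliary sorted list V, then y's group is within ⌈D/g⌉ + 1 groups of G, and hence y's nearest representative in V is within 2(⌈D/g⌉ + 1) positions of any representative of G in V. -/

import Mathlib

/-- Finger-search locality: in a list partitioned into consecutive groups of
size ≥ g (except possibly the last), if `y ≥ x` lies within distance `D` of `x`
(at most `D` elements strictly between), then `y`'s group is within
`⌈D/g⌉ + 1` groups of `x`'s group, and since each group contributes at most 2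
representatives to the auxiliary list `V`, at most `2(⌈D/g⌉ + 1)`
representatives separate them in `V`. -/
theorem stmt_8 (N g D : ℕ) (hg : 1 ≤ g) (gp : ℕ → ℕ) (hmono : Monotone gp)
    (repCount : ℕ → ℕ) (hrep : ∀ j, repCount j ≤ 2)
    (hsize : ∀ j < gp (N - 1),
      g ≤ ((Finset.range N).filter (fun i => gp i = j)).card)
    (x y : ℕ) (hxy : x ≤ y) (hyN : y < N) (hD : y - x ≤ D + 1) :
    gp y ≤ gp x + ((D + g - 1) / g + 1) ∧
      ∑ j ∈ Finset.Ioc (gp x) (gp y), repCount j ≤ 2 * ((D + g - 1) / g + 1) := by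
  have key : gp y ≤ gp x + ((D + g - 1) / g + 1) := by
    by_cases h1 : gp y ≤ gp x + 1
    · exact le_trans h1 (Nat.add_le_add_left (Nat.le_add_left 1 _) _)
    push_neg at h1
    set S : ℕ → Finset ℕ := fun j => (Finset.range N).filter (fun i => gp i = j) with hS
    have hsub : ∀ j ∈ Finset.Ioo (gp x) (gp y), S j ⊆ Finset.Ioo x y := by
      intro j hj i hi
      simp only [hS, Finset.mem_filter, Finset.mem_range] at hi
      simp only [Finset.mem_Ioo] at hj ⊢
      constructor
      · by_contra h
        push_neg at h
        have := hmono h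
        omega
      · by_contra h
        push_neg at h
        have := hmono h
        omega
    have hdisj : (↑(Finset.Ioo (gp x) (gp y)) : Set ℕ).PairwiseDisjoint S := by
      intro a _ b _ hab
      simp only [Finset.disjoint_left, hS, Finset.mem_filter]
      rintro i ⟨_, h1⟩ ⟨_, h2⟩
      exact hab (h1 ▸ h2)
    have hsum : ∑ j ∈ Finset.Ioo (gp x) (gp y), (S j).card ≤ (Finset.Ioo x y).card := by
      rw [← Finset.card_biUnion (fun a ha b hb hab => hdisj ha hb hab)]
      apply Finset.card_le_card
      intro i hi
      rw [Finset.mem_biUnion] at hi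
      obtain ⟨j, hj, hij⟩ := hi
      exact hsub j hj hij
    have hlow : (Finset.Ioo (gp x) (gp y)).card * g ≤
        ∑ j ∈ Finset.Ioo (gp x) (gp y), (S j).card := by
      calc (Finset.Ioo (gp x) (gp y)).card * g
          = ∑ _j ∈ Finset.Ioo (gp x) (gp y), g := by
            rw [Finset.sum_const, smul_eq_mul]
        _ ≤ _ := by
            apply Finset.sum_le_sum
            intro j hj
            apply hsize
            rw [Finset.mem_Ioo] at hj
            have : gp y ≤ gp (N - 1) := hmono (by omega)
            omega
    have hcard1 : (Finset.Ioo (gp x) (gp y)).card = gp y - gp x - 1 := Nat.card_Ioo _ _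
    have hcard2 : (Finset.Ioo x y).card = y - x - 1 := Nat.card_Ioo _ _
    rw [hcard1] at hlow
    rw [hcard2] at hsum
    have hmain : (gp y - gp x - 1) * g ≤ D := by omega
    have h2 : gp y - gp x - 1 ≤ D / g := by
      rw [Nat.le_div_iff_mul_le hg]
      exact hmain
    have h3 : D / g ≤ (D + g - 1) / g := Nat.div_le_div_right (by omega)
    have h4 : gp y - gp x - 1 ≤ (D + g - 1) / g := le_trans h2 h3
    generalize (D + g - 1) / g = k at h4 ⊢
    omega
  refine ⟨key, ?_⟩
  calc ∑ j ∈ Finset.Ioc (gp x) (gp y), repCount j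
      ≤ ∑ _j ∈ Finset.Ioc (gp x) (gp y), 2 :=
        Finset.sum_le_sum fun j _ => hrep j
    _ = (Finset.Ioc (gp x) (gp y)).card * 2 := by rw [Finset.sum_const, smul_eq_mul]
    _ ≤ ((D + g - 1) / g + 1) * 2 := by
        apply Nat.mul_le_mul_right
        rw [Nat.card_Ioc]
        generalize (D + g - 1) / g = k at key ⊢
        omega
    _ = 2 * ((D + g - 1) / g + 1) := mul_comm _ _
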